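/- Let s ≥ 1, t ≥ 2, z ≥ 1 and λ be natural numbers with λ > z + s − 1, and set θ = t·s + λ. Define P_CA = {j + s·i : 0 ≤ j ≤ s−1, 0 ≤ i ≤ t−1}, P_CB = {(s−1−k) + θ·l : 0 ≤ k ≤ s−1, 0 ≤ l ≤ t−1}, P_SA = {t·s + u : 0 ≤ u ≤ z−1}, and P_SB = {t·s + θ·(t−1) + r : 0 ≤ r ≤ z−1}. Then the sumset (P_CA ∪ P_SA) + (P_CB ∪ P_SB) has cardinality 2·t·s + (t·s + z + s − 1)·(t−1) + 2z − 1. -/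
import Mathlib


open Pointwise

private lemma age2_memA_iff (s t z : ℕ) (hs : 1 ≤ s) (ht : 1 ≤ t) (a : ℕ) :
    a ∈ ({n : ℕ | ∃ j i, j < s ∧ i < t ∧ n = j + s * i} ∪
      {n : ℕ | ∃ u, u < z ∧ n = t * s + u}) ↔ a < t * s + z := by
  constructor
  · rintro (⟨j, i, hj, hi, rfl⟩ | ⟨u, hu, rfl⟩)
    · have h1 : s * (i + 1) ≤ s * t := Nat.mul_le_mul_left s hi
      have h2 : s * (i + 1) = s * i + s := by ring
      have h3 : s * t = t * s := mul_comm s t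
      omega
    · omega
  · intro ha
    by_cases h : a < t * s
    · left
      refine ⟨a % s, a / s, Nat.mod_lt _ hs, ?_, (Nat.mod_add_div a s).symm⟩
      rw [Nat.div_lt_iff_lt_mul hs]
      omega
    · right; exact ⟨a - t * s, by omega, by omega⟩

private lemma age2_memB_fwd (s t z th : ℕ) (b : ℕ)
    (hb : b ∈ ({n : ℕ | ∃ k l, k < s ∧ l < t ∧ n = (s - 1 - k) + th * l} ∪
      {n : ℕ | ∃ r, r < z ∧ n = t * s + th * (t - 1) + r})) :
    (∃ l, l < t ∧ th * l ≤ b ∧ b < th * l + s) ∨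
      (t * s + th * (t - 1) ≤ b ∧ b < t * s + th * (t - 1) + z) := by
  rcases hb with ⟨k, l, hk, hl, rfl⟩ | ⟨r, hr, rfl⟩
  · exact Or.inl ⟨l, hl, by omega, by omega⟩
  · exact Or.inr ⟨by omega, by omega⟩

private lemma age2_memB_C (s t z th : ℕ) (m l : ℕ) (hm : m < s) (hl : l < t) :
    (m + th * l) ∈ ({n : ℕ | ∃ k l, k < s ∧ l < t ∧ n = (s - 1 - k) + th * l} ∪
      {n : ℕ | ∃ r, r < z ∧ n = t * s + th * (t - 1) + r}) :=
  Or.inl ⟨s - 1 - m, l, by omega, hl, by omega⟩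

private lemma age2_memB_S (s t z th : ℕ) (r : ℕ) (hr : r < z) :
    (t * s + th * (t - 1) + r) ∈
      ({n : ℕ | ∃ k l, k < s ∧ l < t ∧ n = (s - 1 - k) + th * l} ∪
      {n : ℕ | ∃ r, r < z ∧ n = t * s + th * (t - 1) + r}) :=
  Or.inr ⟨r, hr, rfl⟩

/-- AGE-CMPC worker count for λ > z + s − 1 (θ = t·s + λ),
Case 2 of the Appendix H lemma:
|(P_CA ∪ P_SA) + (P_CB ∪ P_SB)| = 2ts + (ts+z+s−1)(t−1) + 2z − 1,
independent of λ. -/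
theorem age_workers_lambda_ge_z_case2 (s t z lam : ℕ) (hs : 1 ≤ s) (ht : 2 ≤ t)
    (hz : 1 ≤ z) (hlam : z + s - 1 < lam) :
    (({n : ℕ | ∃ j i, j < s ∧ i < t ∧ n = j + s * i} ∪
      {n : ℕ | ∃ u, u < z ∧ n = t * s + u}) +
     ({n : ℕ | ∃ k l, k < s ∧ l < t ∧ n = (s - 1 - k) + (t * s + lam) * l} ∪
      {n : ℕ | ∃ r, r < z ∧ n = t * s + (t * s + lam) * (t - 1) + r})).ncard
      = 2 * (t * s) + (t * s + z + s - 1) * (t - 1) + 2 * z - 1 := by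
  set th := t * s + lam with hth
  have hKth : t * s + z + s - 1 < th := by omega
  set F : Finset ℕ :=
    ((Finset.range (t - 1)).biUnion fun l =>
      Finset.Ico (th * l) (th * l + (t * s + z + s - 1))) ∪
      Finset.Ico (th * (t - 1)) (th * (t - 1) + (2 * (t * s) + 2 * z - 1)) with hF
  have hst : s ≤ t * s := Nat.le_mul_of_pos_left s (by omega)
  have hset :
      (({n : ℕ | ∃ j i, j < s ∧ i < t ∧ n = j + s * i} ∪
        {n : ℕ | ∃ u, u < z ∧ n = t * s + u}) +
       ({n : ℕ | ∃ k l, k < s ∧ l < t ∧ n = (s - 1 - k) + th * l} ∪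
        {n : ℕ | ∃ r, r < z ∧ n = t * s + th * (t - 1) + r})) = (↑F : Set ℕ) := by
    ext n
    rw [Set.mem_add, Finset.mem_coe, hF, Finset.mem_union, Finset.mem_biUnion]
    simp only [Finset.mem_range, Finset.mem_Ico]
    constructor
    · rintro ⟨a, ha, b, hb, rfl⟩
      have haN : a < t * s + z := (age2_memA_iff s t z hs (by omega) a).mp ha
      rcases age2_memB_fwd s t z th b hb with ⟨l, hl, hb1, hb2⟩ | ⟨hb1, hb2⟩
      · by_cases hl' : l < t - 1
        · left
          exact ⟨l, hl', by omega, by omega⟩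
        · right
          have hl2 : l = t - 1 := by omega
          subst hl2
          exact ⟨by omega, by omega⟩
      · right
        exact ⟨by omega, by omega⟩
    · intro h
      have h0N : 0 < t * s + z := by omega
      rcases h with ⟨l, hl, h1, h2⟩ | ⟨h1, h2⟩
      · -- block l < t - 1
        by_cases hm : n - th * l < s
        · refine ⟨0, (age2_memA_iff s t z hs (by omega) 0).mpr h0N,
            (n - th * l) + th * l,
            age2_memB_C s t z th (n - th * l) l hm (by omega), by omega⟩
        · refine ⟨n - th * l - (s - 1),
            (age2_memA_iff s t z hs (by omega) _).mpr (by omega),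
            (s - 1) + th * l,
            age2_memB_C s t z th (s - 1) l (by omega) (by omega), by omega⟩
      · -- last block
        by_cases h3 : n - th * (t - 1) < t * s + z + s - 1
        · by_cases hm : n - th * (t - 1) < s
          · refine ⟨0, (age2_memA_iff s t z hs (by omega) 0).mpr h0N,
              (n - th * (t - 1)) + th * (t - 1),
              age2_memB_C s t z th _ (t - 1) hm (by omega), by omega⟩
          · refine ⟨n - th * (t - 1) - (s - 1),
              (age2_memA_iff s t z hs (by omega) _).mpr (by omega),
              (s - 1) + th * (t - 1),
              age2_memB_C s t z th (s - 1) (t - 1) (by omega) (by omega), by omega⟩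
        · by_cases h4 : n - th * (t - 1) - t * s < z
          · refine ⟨0, (age2_memA_iff s t z hs (by omega) 0).mpr h0N,
              t * s + th * (t - 1) + (n - th * (t - 1) - t * s),
              age2_memB_S s t z th _ h4, by omega⟩
          · refine ⟨n - th * (t - 1) - t * s - (z - 1),
              (age2_memA_iff s t z hs (by omega) _).mpr (by omega),
              t * s + th * (t - 1) + (z - 1),
              age2_memB_S s t z th (z - 1) (by omega), by omega⟩
  rw [hset, Set.ncard_coe_finset, hF]
  have hsep : ∀ l1 l2 : ℕ, l1 < l2 →
      Disjoint (Finset.Ico (th * l1) (th * l1 + (t * s + z + s - 1)))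
        (Finset.Ico (th * l2) (th * l2 + (t * s + z + s - 1))) := by
    intro l1 l2 hlt
    rw [Finset.disjoint_left]
    intro x hx hx'
    rw [Finset.mem_Ico] at hx hx'
    have e1 : th * (l1 + 1) ≤ th * l2 := Nat.mul_le_mul_left th (by omega)
    have e2 : th * (l1 + 1) = th * l1 + th := by ring
    omega
  have hdisj : Disjoint
      ((Finset.range (t - 1)).biUnion fun l =>
        Finset.Ico (th * l) (th * l + (t * s + z + s - 1)))
      (Finset.Ico (th * (t - 1)) (th * (t - 1) + (2 * (t * s) + 2 * z - 1))) := by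
    rw [Finset.disjoint_left]
    intro x hx hx'
    rw [Finset.mem_biUnion] at hx
    obtain ⟨l, hl, hxl⟩ := hx
    rw [Finset.mem_range] at hl
    rw [Finset.mem_Ico] at hxl hx'
    have e1 : th * (l + 1) ≤ th * (t - 1) := Nat.mul_le_mul_left th (by omega)
    have e2 : th * (l + 1) = th * l + th := by ring
    omega
  rw [Finset.card_union_of_disjoint hdisj,
    Finset.card_biUnion (fun l1 h1 l2 h2 hne => by
      rcases lt_or_gt_of_ne hne with h | h
      · exact hsep l1 l2 h
      · exact (hsep l2 l1 h).symm)]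
  simp only [Nat.card_Ico, Nat.add_sub_cancel_left, Finset.sum_const,
    Finset.card_range, smul_eq_mul]
  rw [mul_comm (t - 1)]
  omega
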